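/- If G is a K_{r+1}-free graph on n vertices with more than t(n,r) - ⌊n/r⌋ + 1 edges (n ≥ 2r+1) such that adding any edge creates a K_{r+1}, then G is a complete r-partite graph. -/

import Mathlib

open Finset

namespace BrouwerAux

/-- Nonedge count of the balanced complete multipartite graph: `∑_{t<M} ⌊t/r⌋`. -/
def mm (r M : ℕ) : ℕ := ∑ t ∈ range M, t / r

/-- Edge count of the Turán graph `T(M,r)`: `∑_{t<M} (t - ⌊t/r⌋)`. -/
def tE (r M : ℕ) : ℕ := ∑ t ∈ range M, (t - t / r)

lemma mm_succ (r M : ℕ) : mm r (M + 1) = mm r M + M / r := by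
  simp [mm, sum_range_succ]

lemma tE_succ (r M : ℕ) : tE r (M + 1) = tE r M + (M - M / r) := by
  simp [tE, sum_range_succ]

lemma tE_add_mm (r M : ℕ) : 2 * (tE r M + mm r M) + M = M * M := by
  have h : tE r M + mm r M = ∑ t ∈ range M, t := by
    rw [tE, mm, ← sum_add_distrib]
    refine sum_congr rfl fun t _ => ?_
    exact Nat.sub_add_cancel (Nat.div_le_self t r)
  rw [h, mul_comm, sum_range_id_mul_two]
  cases M with
  | zero => rfl
  | succ m => simp [Nat.succ_sub_one]; ring

/-- Convexity: any composition into `r` parts has at least as many internal pairs as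
the balanced one (in doubled-square form). -/
lemma sq_sum_ge (r : ℕ) (hr : 0 < r) (e : Fin r → ℕ) :
    2 * mm r (∑ l, e l) + (∑ l, e l) ≤ ∑ l, e l * e l := by
  set M := ∑ l, e l with hM
  clear_value M
  induction M generalizing e with
  | zero => simp [mm]
  | succ M ih =>
    -- pigeonhole: some part satisfies r * e l ≥ M + 1
    have hex : ∃ l, M + 1 ≤ r * e l := by
      by_contra hcon
      push_neg at hcon
      have h1 : ∀ l, e l ≤ M / r := fun l =>
        Nat.le_div_iff_mul_le hr |>.mpr (by have := hcon l; rw [mul_comm]; omega)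
      have h2 : (M + 1 : ℕ) ≤ r * (M / r) := by
        calc M + 1 = ∑ l, e l := hM
        _ ≤ ∑ _l : Fin r, M / r := sum_le_sum fun l _ => h1 l
        _ = r * (M / r) := by simp [mul_comm]
      have := Nat.mul_div_le M r
      omega
    obtain ⟨l, hl⟩ := hex
    have hel : 1 ≤ e l := by
      rcases Nat.eq_zero_or_pos (e l) with h | h
      · rw [h] at hl; omega
      · exact h
    have hdiv : M / r + 1 ≤ e l := by
      have : M / r < e l := (Nat.div_lt_iff_lt_mul hr).mpr (by rw [mul_comm]; omega)
      omega
    set e' : Fin r → ℕ := Function.update e l (e l - 1) with he'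
    have hdiffcongr : ∑ x ∈ univ \ {l}, e' x = ∑ x ∈ univ \ {l}, e x :=
      sum_congr rfl fun x hx => by
        rw [he', Function.update_of_ne (by simpa using (mem_sdiff.mp hx).2)]
    have hdiffcongr2 : ∑ x ∈ univ \ {l}, e' x * e' x = ∑ x ∈ univ \ {l}, e x * e x :=
      sum_congr rfl fun x hx => by
        rw [he', Function.update_of_ne (by simpa using (mem_sdiff.mp hx).2)]
    have hsplit := Finset.sum_eq_sum_sdiff_singleton_add (mem_univ l) e
    have hsplit' := Finset.sum_eq_sum_sdiff_singleton_add (mem_univ l) e'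
    have hsplitsq := Finset.sum_eq_sum_sdiff_singleton_add (mem_univ l) (fun x => e x * e x)
    have hsplitsq' := Finset.sum_eq_sum_sdiff_singleton_add (mem_univ l) (fun x => e' x * e' x)
    have hel' : e' l = e l - 1 := by rw [he', Function.update_self]
    have hsum' : M = ∑ x, e' x := by
      rw [hsplit', hdiffcongr, hel']
      omega
    have ihe := ih e' hsum'
    have hj : e' l * e' l = (e l - 1) * (e l - 1) := by rw [hel']
    have h2 : (e l - 1) * (e l - 1) + (2 * e l - 1) = e l * e l := by
      cases' Nat.exists_eq_add_of_le hel with c hc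
      rw [hc]
      have hcc : 1 + c - 1 = c := by omega
      rw [hcc]
      have h3 : (1 + c) * (1 + c) = c * c + 2 * c + 1 := by ring
      omega
    rw [mm_succ]
    omega

end BrouwerAux

open Finset

namespace BrouwerAux

/-- Number of naturals below `n` congruent to `i` mod `r`. -/
def cnt (r n i : ℕ) : ℕ := #((range n).filter (· % r = i))

lemma cnt_filter_eq (r n : ℕ) (hr : 0 < r) :
    (range n).filter (· % r = n % r) = (range (n / r)).image (· * r + n % r) := by
  ext y
  simp only [mem_filter, mem_range, mem_image]
  constructor
  · rintro ⟨hy, hm⟩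
    refine ⟨y / r, ?_, ?_⟩
    · by_contra hcon
      push_neg at hcon
      have h1 : n / r * r ≤ y / r * r := Nat.mul_le_mul_right r hcon
      have h2 : y / r * r + y % r = y := Nat.div_add_mod' y r
      have h3 : n / r * r + n % r = n := Nat.div_add_mod' n r
      omega
    · rw [← hm]; exact Nat.div_add_mod' y r
  · rintro ⟨q, hq, rfl⟩
    constructor
    · have h3 : n / r * r + n % r = n := Nat.div_add_mod' n r
      have : (q + 1) * r ≤ n / r * r := Nat.mul_le_mul_right r hq
      have : q * r + r ≤ n / r * r := by rw [add_one_mul] at this; omega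
      omega
    · have h1 : (q * r + n % r) % r = (n % r) % r := by
        rw [add_comm]; exact Nat.add_mul_mod_self_right (n % r) q r
      have h2 : (n % r) % r = n % r := Nat.mod_eq_of_lt (Nat.mod_lt n hr)
      omega

lemma cnt_mod_self (r n : ℕ) (hr : 0 < r) : cnt r n (n % r) = n / r := by
  rw [cnt, cnt_filter_eq r n hr, card_image_of_injective _ ?_, card_range]
  intro a b hab
  simp only [] at hab
  have : a * r = b * r := by omega
  exact Nat.eq_of_mul_eq_mul_right hr this

lemma cnt_ge (r n i : ℕ) (hr : 0 < r) (hi : i < r) : n / r ≤ cnt r n i := by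
  have himg : (range (n / r)).image (· * r + i) ⊆ (range n).filter (· % r = i) := by
    intro y hy
    simp only [mem_image, mem_range] at hy
    obtain ⟨q, hq, rfl⟩ := hy
    simp only [mem_filter, mem_range]
    constructor
    · have h3 : n / r * r + n % r = n := Nat.div_add_mod' n r
      have : (q + 1) * r ≤ n / r * r := Nat.mul_le_mul_right r hq
      have : q * r + r ≤ n / r * r := by rw [add_one_mul] at this; omega
      omega
    · have h1 : (q * r + i) % r = i % r := by
        rw [add_comm]; exact Nat.add_mul_mod_self_right i q r
      have h2 : i % r = i := Nat.mod_eq_of_lt hi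
      omega
  calc n / r = #((range (n / r)).image (· * r + i)) := by
        rw [card_image_of_injective _ ?_, card_range]
        intro a b hab
        simp only [] at hab
        have : a * r = b * r := by omega
        exact Nat.eq_of_mul_eq_mul_right hr this
  _ ≤ _ := card_le_card himg

lemma sum_cnt (r n : ℕ) (hr : 0 < r) : ∑ i ∈ range r, cnt r n i = n := by
  have h := Finset.card_eq_sum_card_fiberwise
    (s := range n) (t := range r) (f := (· % r))
    (fun x hx => mem_range.mpr (Nat.mod_lt x hr))
  rw [card_range] at h
  conv_rhs => rw [h]
  exact sum_congr rfl fun i _ => rfl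

lemma sum_cnt_sq (r n : ℕ) (hr : 0 < r) :
    ∑ i ∈ range r, cnt r n i * cnt r n i = n + 2 * mm r n := by
  induction n with
  | zero => simp [cnt, mm]
  | succ n ih =>
    have hstep : ∀ i, cnt r (n + 1) i = cnt r n i + if n % r = i then 1 else 0 := by
      intro i
      rw [cnt, cnt, range_add_one, filter_insert]
      split_ifs with h
      · rw [card_insert_of_notMem (by simp)]
      · simp
    have hmem : n % r ∈ range r := mem_range.mpr (Nat.mod_lt n hr)
    have h1 := Finset.sum_eq_sum_sdiff_singleton_add hmem
      (fun i => cnt r (n + 1) i * cnt r (n + 1) i)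
    have h2 := Finset.sum_eq_sum_sdiff_singleton_add hmem
      (fun i => cnt r n i * cnt r n i)
    have hcongr : ∑ i ∈ range r \ {n % r}, cnt r (n + 1) i * cnt r (n + 1) i
        = ∑ i ∈ range r \ {n % r}, cnt r n i * cnt r n i := by
      refine sum_congr rfl fun i hi => ?_
      have : ¬(n % r = i) := by simpa [eq_comm] using (mem_sdiff.mp hi).2
      rw [hstep i, if_neg this, add_zero]
    have hself : cnt r (n + 1) (n % r) = n / r + 1 := by
      rw [hstep, if_pos rfl, cnt_mod_self r n hr]
    have hsq : cnt r (n + 1) (n % r) * cnt r (n + 1) (n % r)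
        = cnt r n (n % r) * cnt r n (n % r) + 2 * (n / r) + 1 := by
      rw [hself, cnt_mod_self r n hr]; ring
    rw [mm_succ]
    omega

lemma turan_edge_count (n r : ℕ) (hr : 0 < r) :
    #(SimpleGraph.turanGraph n r).edgeFinset = tE r n := by
  classical
  have hdeg : ∀ x : Fin n, (SimpleGraph.turanGraph n r).degree x
      = n - cnt r n (x.val % r) := by
    intro x
    have h1 : (SimpleGraph.turanGraph n r).degree x
        = #(univ.filter (fun y : Fin n => ¬ (y.val % r = x.val % r))) := by
      rw [← SimpleGraph.card_neighborFinset_eq_degree]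
      congr 1
      ext y
      rw [SimpleGraph.mem_neighborFinset]
      simp [SimpleGraph.turanGraph, eq_comm]
    have h2 : #(univ.filter (fun y : Fin n => (y.val % r = x.val % r))) = cnt r n (x.val % r) := by
      rw [cnt]
      refine Finset.card_bij (fun y _ => y.val) ?_ ?_ ?_
      · intro a ha; simp only [mem_filter, mem_univ, true_and] at ha
        simp [ha, a.isLt]
      · intro a _ b _ hab; exact Fin.val_injective hab
      · intro b hb
        simp only [mem_filter, mem_range] at hb
        exact ⟨⟨b, hb.1⟩, by simp [hb.2]⟩
    have h3 := Finset.card_filter_add_card_filter_not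
      (s := (univ : Finset (Fin n))) (p := fun y : Fin n => (y.val % r = x.val % r))
    rw [h1]
    simp only [card_univ, Fintype.card_fin] at h3
    omega
  have hhs := SimpleGraph.sum_degrees_eq_twice_card_edges (SimpleGraph.turanGraph n r)
  have hsum : ∑ x : Fin n, (SimpleGraph.turanGraph n r).degree x
      = ∑ t ∈ range n, (n - cnt r n (t % r)) := by
    rw [← Fin.sum_univ_eq_sum_range (fun t => n - cnt r n (t % r))]
    exact Finset.sum_congr rfl fun x _ => hdeg x
  have hfib : ∑ t ∈ range n, (n - cnt r n (t % r))
      = ∑ i ∈ range r, (cnt r n i * (n - cnt r n i)) := by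
    rw [← Finset.sum_fiberwise_of_maps_to (fun x hx => mem_range.mpr (Nat.mod_lt x hr))
      (fun t => n - cnt r n (t % r))]
    refine sum_congr rfl fun i hi => ?_
    have hc : ∀ t ∈ (range n).filter (· % r = i),
        n - cnt r n (t % r) = n - cnt r n i := by
      intro t ht
      rw [(mem_filter.mp ht).2]
    rw [sum_congr rfl hc, Finset.sum_const, smul_eq_mul]
    rfl
  have hcnt_le : ∀ i ∈ range r, cnt r n i ≤ n := by
    intro i _
    exact le_trans (card_filter_le _ _) (by simp)
  have hexp : ∑ i ∈ range r, (cnt r n i * (n - cnt r n i))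
      + ∑ i ∈ range r, cnt r n i * cnt r n i = n * n := by
    have : ∀ i ∈ range r, cnt r n i * (n - cnt r n i) + cnt r n i * cnt r n i
        = cnt r n i * n := by
      intro i hi
      have := hcnt_le i hi
      rw [← Nat.mul_add, Nat.sub_add_cancel this]
    rw [← sum_add_distrib, Finset.sum_congr rfl this, ← Finset.sum_mul, sum_cnt r n hr]
  have hmm := sum_cnt_sq r n hr
  have htm := tE_add_mm r n
  omega

end BrouwerAux
set_option linter.unusedSectionVars false
set_option linter.unusedVariables false

namespace BrouwerAux

open Finset SimpleGraph

variable {V : Type*} [Fintype V] [DecidableEq V]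

/-- `G` has all its edges inside `s`. -/
def Supp (s : Finset V) (G : SimpleGraph V) : Prop := ∀ ⦃x y : V⦄, G.Adj x y → x ∈ s

/-- `G` is saturated relative to `s`: adding any missing edge inside `s` creates an
`(r+1)`-clique. -/
def RelSat (r : ℕ) (s : Finset V) (G : SimpleGraph V) : Prop :=
  ∀ x y : V, x ∈ s → y ∈ s → x ≠ y → ¬ G.Adj x y →
    ¬ (G ⊔ SimpleGraph.edge x y).CliqueFree (r + 1)

/-- Instance-free edge count. -/
noncomputable def EE (K : SimpleGraph V) : ℕ := K.edgeSet.ncard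

lemma ncE (K : SimpleGraph V) [DecidableRel K.Adj] : EE K = #K.edgeFinset :=
  Set.ncard_eq_toFinset_card' _

lemma Supp.mem_right {s : Finset V} {G : SimpleGraph V} (h : Supp s G) {x y : V}
    (hxy : G.Adj x y) : y ∈ s := h hxy.symm

/-- The graph `G` with all edges at `v` removed. -/
def delv (G : SimpleGraph V) (v : V) : SimpleGraph V where
  Adj x y := G.Adj x y ∧ x ≠ v ∧ y ≠ v
  symm := ⟨fun x y h => ⟨h.1.symm, h.2.2, h.2.1⟩⟩
  loopless := ⟨fun x => by simp⟩

instance delv.instDecidableRelAdj (G : SimpleGraph V) [DecidableRel G.Adj] (v : V) :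
    DecidableRel (delv G v).Adj := fun x y =>
  inferInstanceAs (Decidable (G.Adj x y ∧ x ≠ v ∧ y ≠ v))

lemma delv_le (G : SimpleGraph V) (v : V) : delv G v ≤ G := fun x y h => h.1

lemma delv_adj {G : SimpleGraph V} {v x y : V} :
    (delv G v).Adj x y ↔ G.Adj x y ∧ x ≠ v ∧ y ≠ v := Iff.rfl

lemma EE_delv (G : SimpleGraph V) [DecidableRel G.Adj] (v : V) :
    EE (delv G v) + G.degree v = EE G := by
  rw [ncE, ncE]
  have h1 : (delv G v).edgeFinset = G.edgeFinset.filter (fun e => ¬ v ∈ e) := by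
    ext e
    induction e with
    | _ x y =>
      simp only [mem_edgeFinset, mem_edgeSet, mem_filter, delv_adj, Sym2.mem_iff]
      constructor
      · rintro ⟨h, hx, hy⟩
        exact ⟨h, by rintro (rfl | rfl) <;> simp_all⟩
      · rintro ⟨h, hv⟩
        push_neg at hv
        exact ⟨h, fun hc => hv.1 hc.symm, fun hc => hv.2 hc.symm⟩
  have h2 : G.incidenceFinset v = G.edgeFinset.filter (fun e => v ∈ e) :=
    G.incidenceFinset_eq_filter v
  have h3 := Finset.card_filter_add_card_filter_not
    (s := G.edgeFinset) (p := fun e => v ∈ e)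
  have h4 : #(G.incidenceFinset v) = G.degree v :=
    card_incidenceFinset_eq_degree (G := G) (v := v)
  rw [h1]
  rw [h2] at h4
  omega

lemma supp_delv {s : Finset V} {G : SimpleGraph V} (h : Supp s G) (v : V) :
    Supp (s.erase v) (delv G v) := by
  intro x y hxy
  exact mem_erase.mpr ⟨hxy.2.1, h hxy.1⟩

/-- Resaturation: every cliquefree graph supported on `t` extends to a relatively
saturated one. -/
lemma exists_saturation (r : ℕ) (t : Finset V) :
    ∀ (c : ℕ) (K : SimpleGraph V),
    Fintype.card (Sym2 V) ≤ c + EE K → Supp t K → K.CliqueFree (r + 1) →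
    ∃ (H : SimpleGraph V), K ≤ H ∧ Supp t H ∧
      H.CliqueFree (r + 1) ∧ RelSat r t H ∧ EE K ≤ EE H := by
  intro c
  have key : ∀ (K : SimpleGraph V) (x y : V), x ≠ y → ¬ K.Adj x y →
      EE (K ⊔ SimpleGraph.edge x y) = EE K + 1 := by
    intro K x y hxy hnadj
    have hset : (K ⊔ SimpleGraph.edge x y).edgeSet = insert s(x, y) K.edgeSet := by
      rw [edgeSet_sup, edge_edgeSet_of_ne hxy, Set.union_singleton]
    rw [EE, hset, Set.ncard_insert_of_notMem (by simpa using hnadj) (Set.toFinite _), EE]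
  have hub : ∀ K : SimpleGraph V, EE K ≤ Fintype.card (Sym2 V) := by
    intro K
    calc EE K ≤ (Set.univ : Set (Sym2 V)).ncard :=
          Set.ncard_le_ncard (Set.subset_univ _) (Set.toFinite _)
    _ = Fintype.card (Sym2 V) := by rw [Set.ncard_univ, Nat.card_eq_fintype_card]
  induction c with
  | zero =>
    intro K hc hsupp hfree
    refine ⟨K, le_refl _, hsupp, hfree, ?_, le_refl _⟩
    intro x y hx hy hxy hnadj hcf
    have hplus := key K x y hxy hnadj
    have hle := hub (K ⊔ SimpleGraph.edge x y)
    omega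
  | succ c ih =>
    intro K hc hsupp hfree
    by_cases hbad : ∃ x y : V, x ∈ t ∧ y ∈ t ∧ x ≠ y ∧ ¬ K.Adj x y ∧
        (K ⊔ SimpleGraph.edge x y).CliqueFree (r + 1)
    · obtain ⟨x, y, hx, hy, hxy, hnadj, hcf⟩ := hbad
      have hsupp' : Supp t (K ⊔ SimpleGraph.edge x y) := by
        intro a b hab
        rcases hab with hab | hab
        · exact hsupp hab
        · rw [edge_adj] at hab
          rcases hab.1 with ⟨rfl, rfl⟩ | ⟨rfl, rfl⟩ <;> assumption
      have hplus := key K x y hxy hnadj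
      obtain ⟨H, hle, h1, h2, h3, h4⟩ :=
        ih (K ⊔ SimpleGraph.edge x y) (by omega) hsupp' hcf
      exact ⟨H, le_trans le_sup_left hle, h1, h2, h3, by omega⟩
    · push_neg at hbad
      exact ⟨K, le_refl _, hsupp, hfree, fun x y hx hy hxy hnadj =>
        hbad x y hx hy hxy hnadj, le_refl _⟩

/-- Ordered-pair degree count: for a graph supported on `t`,
the number of ordered adjacent pairs is twice the edge count. -/
lemma ordered_pairs_card {t : Finset V} {K : SimpleGraph V} [DecidableRel K.Adj]
    (hsupp : Supp t K) :
    #((t ×ˢ t).filter fun p => K.Adj p.1 p.2) = 2 * EE K := by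
  rw [ncE]
  have hhs : ∑ x : V, K.degree x = 2 * #K.edgeFinset := K.sum_degrees_eq_twice_card_edges
  have hzero : ∀ x : V, x ∉ t → K.degree x = 0 := by
    intro x hx
    rw [← SimpleGraph.card_neighborFinset_eq_degree, Finset.card_eq_zero]
    ext y
    simp only [SimpleGraph.mem_neighborFinset, Finset.notMem_empty, iff_false]
    intro h
    exact hx (hsupp h)
  have hsum : ∑ x ∈ t, K.degree x = 2 * #K.edgeFinset := by
    rw [← hhs]
    exact Finset.sum_subset (subset_univ t) (fun x _ hx => hzero x hx)
  rw [← hsum]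
  rw [Finset.card_eq_sum_card_fiberwise
    (f := fun p : V × V => p.1) (t := t)
    (fun p hp => (hsupp ((mem_filter.mp hp).2)))]
  refine sum_congr rfl fun x hx => ?_
  rw [← SimpleGraph.card_neighborFinset_eq_degree]
  refine Finset.card_bij (fun p _ => p.2) ?_ ?_ ?_
  · intro p hp
    simp only [mem_filter, mem_product] at hp
    obtain ⟨⟨⟨h1, h2⟩, hadj⟩, hfst⟩ := hp
    subst hfst
    simpa [SimpleGraph.mem_neighborFinset] using hadj
  · intro p hp q hq hpq
    simp only [mem_filter, mem_product] at hp hq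
    have : p.1 = q.1 := by rw [hp.2, hq.2]
    exact Prod.ext this hpq
  · intro y hy
    simp only [SimpleGraph.mem_neighborFinset] at hy
    refine ⟨(x, y), ?_, rfl⟩
    simp only [mem_filter, mem_product]
    exact ⟨⟨⟨hsupp hy, hsupp.mem_right hy⟩, hy⟩, trivial⟩

end BrouwerAux
namespace BrouwerAux

open Finset SimpleGraph

variable {V : Type*} [Fintype V] [DecidableEq V] {r : ℕ}

/-- Edge count of a complete multipartite graph on `s'` in terms of class sizes. -/
lemma cm_edge_count {s' : Finset V} {H : SimpleGraph V} [DecidableRel H.Adj]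
    {f' : V → Fin r} (hsupp : Supp s' H)
    (hiff : ∀ x ∈ s', ∀ y ∈ s', H.Adj x y ↔ f' x ≠ f' y) :
    2 * EE H + ∑ l : Fin r, #(s'.filter (f' · = l)) * #(s'.filter (f' · = l))
      = #s' * #s' := by
  have h1 : #((s' ×ˢ s').filter fun p => H.Adj p.1 p.2) = 2 * EE H :=
    ordered_pairs_card hsupp
  have h2 : #((s' ×ˢ s').filter fun p => ¬ H.Adj p.1 p.2)
      = ∑ l : Fin r, #(s'.filter (f' · = l)) * #(s'.filter (f' · = l)) := by
    rw [Finset.card_eq_sum_card_fiberwise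
      (f := fun p : V × V => f' p.1) (t := (univ : Finset (Fin r)))
      (fun p _ => mem_univ _)]
    refine sum_congr rfl fun l _ => ?_
    rw [← Finset.card_product]
    refine Finset.card_bij (fun p _ => p) ?_ ?_ ?_
    · intro p hp
      simp only [mem_filter, mem_product] at hp ⊢
      obtain ⟨⟨⟨h1', h2'⟩, hnadj⟩, hfst⟩ := hp
      have : f' p.1 = f' p.2 := by
        by_contra hne
        exact hnadj ((hiff _ h1' _ h2').mpr hne)
      exact ⟨⟨h1', hfst⟩, ⟨h2', by rw [← this, hfst]⟩⟩
    · intro p _ q _ h; exact h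
    · intro p hp
      simp only [mem_filter, mem_product] at hp
      obtain ⟨⟨h1', hf1⟩, ⟨h2', hf2⟩⟩ := hp
      refine ⟨p, ?_, rfl⟩
      simp only [mem_filter, mem_product]
      have hnadj : ¬ H.Adj p.1 p.2 := by
        rw [hiff _ h1' _ h2']
        simp only [not_not, hf1, hf2]
      exact ⟨⟨⟨h1', h2'⟩, hnadj⟩, hf1⟩
  have h3 := Finset.card_filter_add_card_filter_not
    (s := s' ×ˢ s') (p := fun p : V × V => H.Adj p.1 p.2)
  rw [Finset.card_product] at h3
  omega

/-- In a relatively saturated graph, a proper colouring upgrades to a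
complete-multipartite description. -/
lemma relSat_coloring {s : Finset V} {G : SimpleGraph V} (hsupp : Supp s G)
    (hfree : G.CliqueFree (r + 1)) (hsat : RelSat r s G) (f : V → Fin r)
    (hcol : ∀ ⦃a b : V⦄, a ∈ s → b ∈ s → G.Adj a b → f a ≠ f b) :
    ∀ x ∈ s, ∀ y ∈ s, (G.Adj x y ↔ f x ≠ f y) := by
  intro x hx y hy
  constructor
  · exact fun h => hcol hx hy h
  · intro hfxy
    by_contra hnadj
    have hxy : x ≠ y := by rintro rfl; exact hfxy rfl
    have hncf := hsat x y hx hy hxy hnadj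
    rw [CliqueFree] at hncf
    push_neg at hncf
    obtain ⟨t, ht⟩ := hncf
    -- pairs inside t other than {x,y} are G-adjacent
    have hGpair : ∀ a ∈ t, ∀ b ∈ t, a ≠ b → ¬(a = x ∧ b = y) → ¬(a = y ∧ b = x) →
        G.Adj a b := by
      intro a ha b hb hab h1 h2
      have := ht.1 ha hb hab
      rcases this with h | h
      · exact h
      · rw [edge_adj] at h
        rcases h.1 with ⟨rfl, rfl⟩ | ⟨rfl, rfl⟩
        · exact absurd ⟨rfl, rfl⟩ h1
        · exact absurd ⟨rfl, rfl⟩ h2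
    have hxt : x ∈ t := by
      by_contra hxt
      refine hfree t ⟨?_, ht.2⟩
      intro a ha b hb hab
      refine hGpair a ha b hb hab ?_ ?_
      · rintro ⟨rfl, rfl⟩; exact hxt ha
      · rintro ⟨rfl, rfl⟩; exact hxt hb
    have hyt : y ∈ t := by
      by_contra hyt
      refine hfree t ⟨?_, ht.2⟩
      intro a ha b hb hab
      refine hGpair a ha b hb hab ?_ ?_
      · rintro ⟨rfl, rfl⟩; exact hyt hb
      · rintro ⟨rfl, rfl⟩; exact hyt ha
    -- t.erase y is a G-clique of size r contained in s
    have hclique_y : ∀ a ∈ t.erase y, ∀ b ∈ t.erase y, a ≠ b → G.Adj a b := by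
      intro a ha b hb hab
      obtain ⟨hay, hat⟩ := Finset.mem_erase.mp ha
      obtain ⟨hby, hbt⟩ := Finset.mem_erase.mp hb
      exact hGpair a hat b hbt hab (fun h => hby h.2) (fun h => hay h.1)
    have hclique_x : ∀ a ∈ t.erase x, ∀ b ∈ t.erase x, a ≠ b → G.Adj a b := by
      intro a ha b hb hab
      obtain ⟨hax, hat⟩ := Finset.mem_erase.mp ha
      obtain ⟨hbx, hbt⟩ := Finset.mem_erase.mp hb
      exact hGpair a hat b hbt hab (fun h => hax h.1) (fun h => hbx h.2)
    have hsub_y : ∀ a ∈ t.erase y, a ∈ s := by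
      intro a ha
      obtain ⟨hay, hat⟩ := Finset.mem_erase.mp ha
      by_cases hax : a = x
      · rwa [hax]
      · have hadj : G.Adj a x :=
          hclique_y a ha x (Finset.mem_erase.mpr ⟨hxy, hxt⟩) hax
        exact hsupp hadj
    have hcard_y : #(t.erase y) = r := by
      rw [Finset.card_erase_of_mem hyt, ht.2]
      rfl
    have hinj : Set.InjOn f ↑(t.erase y) := by
      intro a ha b hb hab
      by_contra hne
      have hadj := hclique_y a ha b hb hne
      exact hcol (hsub_y a ha) (hsub_y b hb) hadj hab
    have himg : (t.erase y).image f = (univ : Finset (Fin r)) := by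
      apply Finset.eq_univ_of_card
      rw [Finset.card_image_of_injOn hinj, hcard_y, Fintype.card_fin]
    have hfy : f y ∈ (t.erase y).image f := by rw [himg]; exact mem_univ _
    obtain ⟨b, hb, hfb⟩ := Finset.mem_image.mp hfy
    by_cases hbx : b = x
    · exact hfxy (by rw [← hbx, hfb])
    · obtain ⟨hby, hbt⟩ := Finset.mem_erase.mp hb
      have hadj : G.Adj b y :=
        hclique_x b (Finset.mem_erase.mpr ⟨hbx, hbt⟩)
          y (Finset.mem_erase.mpr ⟨fun h => hxy h.symm, hyt⟩) hby
      exact hcol (hsub_y b hb) hy hadj hfb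

end BrouwerAux
namespace BrouwerAux

open Finset SimpleGraph

variable {V : Type*} [Fintype V] [DecidableEq V] {r : ℕ}

/-- The transversal covering bound: if `v` is adjacent to nonempty sets `A l` lying in
distinct classes and `G` is `K_{r+1}`-free, then some pair of classes has at least
`#(A i) * #(A j)` missing cross pairs in total. -/
lemma lp_bound (A : Fin r → Finset V) (hA : ∀ l, (A l).Nonempty)
    (G : SimpleGraph V) [DecidableRel G.Adj] (v : V)
    (hadjv : ∀ l, ∀ x ∈ A l, G.Adj v x)
    (hdisj : ∀ {l l' : Fin r} {x : V}, l ≠ l' → x ∈ A l → x ∉ A l')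
    (hfree : G.CliqueFree (r + 1)) :
    ∃ i j : Fin r, i < j ∧ #(A i) * #(A j) ≤
      ∑ p ∈ (univ ×ˢ univ : Finset (Fin r × Fin r)).filter (fun p => p.1 < p.2),
        #(((A p.1) ×ˢ (A p.2)).filter fun q => ¬ G.Adj q.1 q.2) := by
  classical
  set B : Finset (Fin r × Fin r) :=
    (univ ×ˢ univ : Finset (Fin r × Fin r)).filter (fun p => p.1 < p.2) with hB
  set reg : Fin r × Fin r → Finset (V × V) :=
    fun p => ((A p.1) ×ˢ (A p.2)).filter fun q => ¬ G.Adj q.1 q.2 with hreg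
  set XX : ℕ := ∑ p ∈ B, #(reg p) with hXX
  by_contra hcon
  push_neg at hcon
  have hstrict : ∀ p ∈ B, XX + 1 ≤ #(A p.1) * #(A p.2) := by
    intro p hp
    have hlt := hcon p.1 p.2 (mem_filter.mp hp).2
    omega
  -- the transversal type
  have hvnot : ∀ l, v ∉ A l := by
    intro l hv
    exact G.irrefl (hadjv l v hv)
  have hchoice : ∀ g : (∀ l : Fin r, {x // x ∈ A l}),
      ∃ p ∈ B, ¬ G.Adj (g p.1 : V) (g p.2 : V) := by
    intro g
    by_contra hc
    push_neg at hc
    -- all transversal pairs adjacent: build an (r+1)-clique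
    have hadjall : ∀ l l' : Fin r, l ≠ l' → G.Adj (g l : V) (g l' : V) := by
      intro l l' hne
      rcases lt_or_gt_of_ne hne with h | h
      · exact hc (l, l') (by simp [hB, h])
      · exact (hc (l', l) (by simp [hB, h])).symm
    have hginj : Function.Injective (fun l => (g l : V)) := by
      intro l l' h
      by_contra hne
      simp only [] at h
      exact hdisj hne (g l).2 (by rw [h]; exact (g l').2)
    refine hfree (insert v (univ.image fun l => (g l : V))) ⟨?_, ?_⟩
    · intro a ha b hb hab
      simp only [coe_insert, Set.mem_insert_iff, coe_image, Set.mem_image,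
        mem_coe, mem_univ, true_and, Set.mem_setOf_eq] at ha hb
      rcases ha with rfl | ⟨l, rfl⟩
      · rcases hb with rfl | ⟨l', rfl⟩
        · exact absurd rfl hab
        · exact hadjv l' _ (g l').2
      · rcases hb with rfl | ⟨l', rfl⟩
        · exact (hadjv l _ (g l).2).symm
        · have hll' : l ≠ l' := fun h => hab (by rw [h])
          exact hadjall l l' hll'
    · rw [Finset.card_insert_of_notMem, Finset.card_image_of_injective _ hginj,
        card_univ, Fintype.card_fin]
      intro hv
      obtain ⟨l, _, hl⟩ := Finset.mem_image.mp hv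
      exact hvnot l (hl ▸ (g l).2)
  choose F hF1 hF2 using hchoice
  -- count the transversals fiberwise over the chosen pair
  have hcount := Finset.card_eq_sum_card_fiberwise
    (s := (univ : Finset (∀ l : Fin r, {x // x ∈ A l}))) (t := B) (f := F)
    (fun g _ => hF1 g)
  rw [card_univ] at hcount
  have hcardT : Fintype.card (∀ l : Fin r, {x // x ∈ A l}) = ∏ l, #(A l) := by
    rw [Fintype.card_pi]
    exact Finset.prod_congr rfl fun l _ => Fintype.card_coe _
  -- bound each fiber
  have hPrest : ∀ p : Fin r × Fin r, p ∈ B →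
      #(univ.filter fun g : (∀ l : Fin r, {x // x ∈ A l}) => F g = p) ≤
        #(reg p) * ∏ l ∈ (univ \ {p.1, p.2} : Finset (Fin r)), #(A l) := by
    intro p hp
    have hne : p.1 ≠ p.2 := ne_of_lt (mem_filter.mp hp).2
    set tgt : Finset ((V × V) × (Fin r → V)) :=
      (reg p) ×ˢ (Fintype.piFinset fun l : Fin r =>
        if l = p.1 ∨ l = p.2 then ({v} : Finset V) else A l) with htgt
    have hinj : ∀ g ∈ univ.filter (fun g : (∀ l : Fin r, {x // x ∈ A l}) => F g = p),
        (((g p.1 : V), (g p.2 : V)),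
          fun l => if l = p.1 ∨ l = p.2 then v else (g l : V)) ∈ tgt := by
      intro g hg
      have hFg : F g = p := (mem_filter.mp hg).2
      refine Finset.mem_product.mpr ⟨?_, ?_⟩
      · rw [hreg]
        simp only [mem_filter, mem_product]
        refine ⟨⟨(g p.1).2, (g p.2).2⟩, ?_⟩
        have := hF2 g
        rwa [hFg] at this
      · rw [Fintype.mem_piFinset]
        intro l
        by_cases hl : l = p.1 ∨ l = p.2
        · simp [hl]
        · simp only [if_neg hl]
          exact (g l).2
    have hinj2 : ∀ g ∈ univ.filter (fun g : (∀ l : Fin r, {x // x ∈ A l}) => F g = p),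
        ∀ g' ∈ univ.filter (fun g : (∀ l : Fin r, {x // x ∈ A l}) => F g = p),
        (((g p.1 : V), (g p.2 : V)),
          fun l => if l = p.1 ∨ l = p.2 then v else (g l : V)) =
        (((g' p.1 : V), (g' p.2 : V)),
          fun l => if l = p.1 ∨ l = p.2 then v else (g' l : V)) → g = g' := by
      intro g _ g' _ heq
      have h1 := congrArg Prod.fst heq
      have h2 := congrArg Prod.snd heq
      simp only [Prod.mk.injEq] at h1
      funext l
      apply Subtype.ext
      by_cases hl : l = p.1 ∨ l = p.2
      · rcases hl with rfl | rfl
        · exact h1.1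
        · exact h1.2
      · have := congrFun h2 l
        simpa [if_neg hl] using this
    have hle := Finset.card_le_card_of_injOn _ hinj (fun g hg g' hg' => hinj2 g hg g' hg')
    refine le_trans hle ?_
    rw [htgt, Finset.card_product, Fintype.card_piFinset]
    apply Nat.mul_le_mul_left
    have hsplit : ∀ l : Fin r, #(if l = p.1 ∨ l = p.2 then ({v} : Finset V) else A l)
        = if l = p.1 ∨ l = p.2 then 1 else #(A l) := by
      intro l; split_ifs <;> simp
    rw [Finset.prod_congr rfl (fun l _ => hsplit l)]
    have hsub : ({p.1, p.2} : Finset (Fin r)) ⊆ univ := subset_univ _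
    rw [← Finset.prod_sdiff hsub]
    have h1 : ∏ l ∈ ({p.1, p.2} : Finset (Fin r)),
        (if l = p.1 ∨ l = p.2 then 1 else #(A l)) = 1 := by
      apply Finset.prod_eq_one
      intro l hl
      simp only [mem_insert, mem_singleton] at hl
      rw [if_pos hl]
    rw [h1, mul_one]
    apply le_of_eq
    apply Finset.prod_congr rfl
    intro l hl
    have : ¬(l = p.1 ∨ l = p.2) := by
      simp only [mem_sdiff, mem_insert, mem_singleton] at hl
      push_neg at hl
      rintro (h | h) <;> [exact hl.2.1 h; exact hl.2.2 h]
    rw [if_neg this]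
  -- assemble
  set PP : ℕ := ∏ l, #(A l) with hPP
  have hPPsplit : ∀ p : Fin r × Fin r, p ∈ B →
      #(A p.1) * #(A p.2) * ∏ l ∈ (univ \ {p.1, p.2} : Finset (Fin r)), #(A l) = PP := by
    intro p hp
    have hne : p.1 ≠ p.2 := ne_of_lt (mem_filter.mp hp).2
    have hsub : ({p.1, p.2} : Finset (Fin r)) ⊆ univ := subset_univ _
    rw [hPP, ← Finset.prod_sdiff hsub, Finset.prod_pair hne]
    ring
  have hPPpos : 0 < PP := by
    rw [hPP]
    exact Finset.prod_pos fun l _ => Finset.card_pos.mpr (hA l)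
  have hchain : PP * (XX + 1) ≤ XX * PP := by
    calc PP * (XX + 1)
        = (∑ p ∈ B, #(univ.filter fun g : (∀ l : Fin r, {x // x ∈ A l}) => F g = p))
            * (XX + 1) := by rw [← hcount, hcardT, hPP]
    _ = ∑ p ∈ B, #(univ.filter fun g : (∀ l : Fin r, {x // x ∈ A l}) => F g = p)
            * (XX + 1) := by rw [Finset.sum_mul]
    _ ≤ ∑ p ∈ B, #(reg p) * (∏ l ∈ (univ \ {p.1, p.2} : Finset (Fin r)), #(A l))
            * (#(A p.1) * #(A p.2)) := by
          apply Finset.sum_le_sum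
          intro p hp
          calc #(univ.filter fun g : (∀ l : Fin r, {x // x ∈ A l}) => F g = p) * (XX + 1)
              ≤ (#(reg p) * ∏ l ∈ (univ \ {p.1, p.2} : Finset (Fin r)), #(A l)) * (XX + 1) :=
                Nat.mul_le_mul_right _ (hPrest p hp)
          _ ≤ (#(reg p) * ∏ l ∈ (univ \ {p.1, p.2} : Finset (Fin r)), #(A l))
                * (#(A p.1) * #(A p.2)) := Nat.mul_le_mul_left _ (hstrict p hp)
          _ = _ := by ring
    _ = ∑ p ∈ B, #(reg p) * PP := by
          apply Finset.sum_congr rfl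
          intro p hp
          rw [← hPPsplit p hp]
          ring
    _ = XX * PP := by rw [← Finset.sum_mul, hXX]
  have hexp : PP * (XX + 1) = XX * PP + PP := by ring
  omega

end BrouwerAux
namespace BrouwerAux

open Finset SimpleGraph

variable {V : Type*} [Fintype V] [DecidableEq V] {r : ℕ}

lemma EE_comap_subtype {s : Finset V} {G : SimpleGraph V} (hsupp : Supp s G) :
    EE (G.comap ((Function.Embedding.subtype (· ∈ s)) : {x // x ∈ s} ↪ V)) = EE G := by
  have himg : Sym2.map (Function.Embedding.subtype (· ∈ s)) ''
      (G.comap ((Function.Embedding.subtype (· ∈ s)) : {x // x ∈ s} ↪ V)).edgeSet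
      = G.edgeSet := by
    ext e
    induction e with
    | _ x y =>
      simp only [Set.mem_image, mem_edgeSet]
      constructor
      · rintro ⟨e', he', hmap⟩
        induction e' with
        | _ a b =>
          simp only [Sym2.map_pair_eq] at hmap
          rw [Sym2.eq_iff] at hmap
          have hadj : G.Adj a b := he'
          rcases hmap with ⟨h1, h2⟩ | ⟨h1, h2⟩
          · rw [← h1, ← h2]; exact hadj
          · rw [← h1, ← h2]; exact hadj.symm
      · intro hadj
        refine ⟨s(⟨x, hsupp hadj⟩, ⟨y, hsupp.mem_right hadj⟩), ?_, ?_⟩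
        · exact hadj
        · simp [Sym2.map_pair_eq]
  have hinj : Function.Injective (Sym2.map ((Function.Embedding.subtype (· ∈ s)) :
      {x // x ∈ s} ↪ V)) := Sym2.map.injective (Function.Embedding.subtype _).injective
  rw [EE, EE, ← himg, Set.ncard_image_of_injective _ hinj]

/-- Case 1 of the main induction: if the edge count reaches the Turán number,
the graph is complete multipartite by Turán's theorem. -/
lemma case_turan_max {s : Finset V} {G : SimpleGraph V} [DecidableRel G.Adj] (hr : 0 < r)
    (hsupp : Supp s G) (hfree : G.CliqueFree (r + 1)) (hbig : tE r #s ≤ EE G) :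
    ∃ f : V → Fin r, ∀ x ∈ s, ∀ y ∈ s, (G.Adj x y ↔ f x ≠ f y) := by
  classical
  set emb : {x // x ∈ s} ↪ V := Function.Embedding.subtype (· ∈ s) with hemb
  set Ghat : SimpleGraph {x // x ∈ s} := G.comap emb with hGhat
  have hcardS : Fintype.card {x // x ∈ s} = #s := Fintype.card_coe s
  have hEE : EE Ghat = EE G := EE_comap_subtype hsupp
  have hfreehat : Ghat.CliqueFree (r + 1) :=
    hfree.comap (SimpleGraph.Embedding.comap emb G).isContained
  have htm : Ghat.IsTuranMaximal r := by
    refine ⟨hfreehat, ?_⟩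
    intro H' hdH' hfreeH'
    obtain ⟨J, instJ, hJ⟩ := exists_isTuranMaximal (V := {x // x ∈ s}) hr
    have h1 : #H'.edgeFinset ≤ #J.edgeFinset := hJ.2 hfreeH'
    obtain ⟨ψ⟩ := hJ.nonempty_iso_turanGraph
    have h2 : #J.edgeFinset = #(SimpleGraph.turanGraph (#s) r).edgeFinset := by
      rw [hcardS] at ψ
      exact ψ.card_edgeFinset_eq
    have h3 : #(SimpleGraph.turanGraph (#s) r).edgeFinset = tE r (#s) :=
      turan_edge_count _ _ hr
    have h4 : EE G = #Ghat.edgeFinset := by rw [← hEE, ncE]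
    omega
  obtain ⟨φ⟩ := htm.nonempty_iso_turanGraph
  rw [hcardS] at φ
  refine ⟨fun x => if h : x ∈ s then ⟨(φ ⟨x, h⟩).val % r, Nat.mod_lt _ hr⟩ else ⟨0, hr⟩, ?_⟩
  intro x hx y hy
  have hadj : G.Adj x y ↔ Ghat.Adj ⟨x, hx⟩ ⟨y, hy⟩ := Iff.rfl
  rw [hadj, ← φ.map_rel_iff]
  simp only [dif_pos hx, dif_pos hy]
  constructor
  · intro h
    have : (φ ⟨x, hx⟩).val % r ≠ (φ ⟨y, hy⟩).val % r := h
    intro hc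
    rw [Fin.mk.injEq] at hc
    exact this hc
  · intro h
    intro hc
    apply h
    rw [Fin.mk.injEq]
    exact hc

end BrouwerAux
namespace BrouwerAux

open Finset SimpleGraph

variable {V : Type*} [Fintype V] [DecidableEq V] {r : ℕ}

lemma degree_sum_supp {s : Finset V} {G : SimpleGraph V} [DecidableRel G.Adj]
    (hsupp : Supp s G) : ∑ x ∈ s, G.degree x = 2 * EE G := by
  rw [ncE]
  have hhs : ∑ x : V, G.degree x = 2 * #G.edgeFinset := G.sum_degrees_eq_twice_card_edges
  rw [← hhs]
  refine Finset.sum_subset (subset_univ s) (fun x _ hx => ?_)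
  rw [← SimpleGraph.card_neighborFinset_eq_degree, Finset.card_eq_zero]
  ext y
  simp only [SimpleGraph.mem_neighborFinset, Finset.notMem_empty, iff_false]
  exact fun h => hx (hsupp h)

lemma div_mul_bound (r k : ℕ) (hr : 0 < r) : k * (k / r) ≤ k + 2 * mm r k := by
  have h1 : ∀ i ∈ range r, k / r ≤ cnt r k i := fun i hi =>
    cnt_ge r k i hr (mem_range.mp hi)
  calc k * (k / r) = (∑ i ∈ range r, cnt r k i) * (k / r) := by rw [sum_cnt r k hr]
  _ = ∑ i ∈ range r, cnt r k i * (k / r) := by rw [Finset.sum_mul]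
  _ ≤ ∑ i ∈ range r, cnt r k i * cnt r k i :=
      Finset.sum_le_sum fun i hi => Nat.mul_le_mul_left _ (h1 i hi)
  _ = k + 2 * mm r k := sum_cnt_sq r k hr

lemma final_ineq (hr : 0 < r) (e : Fin r → ℕ) (i j : Fin r) (hij : i ≠ j) :
    2 * mm r ((∑ l, e l) + 2) + ((∑ l, e l) + 2)
      ≤ ∑ l, e l * e l + 2 * e i + 2 * e j + 2 := by
  set e'' : Fin r → ℕ := Function.update (Function.update e i (e i + 1)) j (e j + 1)
    with he''
  have hsub : ({i, j} : Finset (Fin r)) ⊆ univ := subset_univ _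
  have hcongr1 : ∀ l ∈ (univ \ {i, j} : Finset (Fin r)), e'' l = e l := by
    intro l hl
    simp only [mem_sdiff, mem_insert, mem_singleton] at hl
    push_neg at hl
    rw [he'', Function.update_of_ne hl.2.2, Function.update_of_ne hl.2.1]
  have hi'' : e'' i = e i + 1 := by
    rw [he'', Function.update_of_ne hij, Function.update_self]
  have hj'' : e'' j = e j + 1 := by rw [he'', Function.update_self]
  have hpair : ∀ f : Fin r → ℕ, ∑ l ∈ ({i, j} : Finset (Fin r)), f l = f i + f j :=
    fun f => Finset.sum_pair hij
  have hsplit : ∀ f : Fin r → ℕ,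
      ∑ l, f l = ∑ l ∈ (univ \ {i, j} : Finset (Fin r)), f l + (f i + f j) := by
    intro f
    rw [← hpair f, Finset.sum_sdiff hsub]
  have hsum'' : ∑ l, e'' l = (∑ l, e l) + 2 := by
    rw [hsplit e'', hsplit e, Finset.sum_congr rfl hcongr1, hi'', hj'']
    ring
  have hsq'' : ∑ l, e'' l * e'' l = (∑ l, e l * e l) + 2 * e i + 2 * e j + 2 := by
    have hcsq : ∀ l ∈ (univ \ {i, j} : Finset (Fin r)), e'' l * e'' l = e l * e l := by
      intro l hl; rw [hcongr1 l hl]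
    rw [hsplit (fun l => e'' l * e'' l), hsplit (fun l => e l * e l),
      Finset.sum_congr rfl hcsq, hi'', hj'']
    ring
  have := sq_sum_ge r hr e''
  rw [hsum'', hsq''] at this
  omega

/-- The main induction: a relatively saturated `K_{r+1}`-free graph with more than
`t(k,r) - k/r + 1` edges is complete multipartite. -/
theorem main_induction (r : ℕ) (hr2 : 2 ≤ r) :
    ∀ (k : ℕ) (s : Finset V) (G : SimpleGraph V) (_ : DecidableRel G.Adj), #s = k →
    2 * r + 1 ≤ k → Supp s G → G.CliqueFree (r + 1) → RelSat r s G →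
    tE r k + 2 ≤ EE G + k / r →
    ∃ f : V → Fin r, ∀ x ∈ s, ∀ y ∈ s, (G.Adj x y ↔ f x ≠ f y) := by
  intro k
  induction k using Nat.strong_induction_on with
  | _ k IH =>
  intro s G instG hk hkr hsupp hfree hsat he
  have hr : 0 < r := by omega
  by_cases hbig : tE r k ≤ EE G
  · exact case_turan_max hr hsupp hfree (by rw [hk]; exact hbig)
  -- now EE G < tE r k, so k / r ≥ 3
  push_neg at hbig
  have ha3 : 3 ≤ k / r := by omega
  have hk3r : 3 * r ≤ k := (Nat.le_div_iff_mul_le hr).mp ha3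
  -- find a vertex of low degree
  by_cases hv : ∃ v ∈ s, G.degree v + (k / r + 1) ≤ k
  swap
  · -- no such vertex: degrees are all large, so EE G ≥ tE r k, contradiction
    exfalso
    push_neg at hv
    have hdegsum : ∑ x ∈ s, G.degree x = 2 * EE G := degree_sum_supp hsupp
    have hlb : k * k ≤ 2 * EE G + k * (k / r) := by
      calc k * k = ∑ _x ∈ s, k := by rw [Finset.sum_const, hk, smul_eq_mul]
      _ ≤ ∑ x ∈ s, (G.degree x + k / r) := by
          refine Finset.sum_le_sum fun x hx => ?_
          have := hv x hx
          omega
      _ = 2 * EE G + k * (k / r) := by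
          rw [Finset.sum_add_distrib, hdegsum, Finset.sum_const, hk, smul_eq_mul]
    have hdm := div_mul_bound r k hr
    have htm := tE_add_mm r k
    omega
  obtain ⟨v, hvs, hvdeg⟩ := hv
  set s' : Finset V := s.erase v with hs'
  have hks' : #s' = k - 1 := by rw [hs', Finset.card_erase_of_mem hvs, hk]
  set G0 : SimpleGraph V := delv G v with hG0
  have hsupp0 : Supp s' G0 := supp_delv hsupp v
  have hfree0 : G0.CliqueFree (r + 1) := by
    intro t ht
    exact hfree t ⟨fun a ha b hb hab => (ht.1 ha hb hab).1, ht.2⟩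
  have hEdel : EE G0 + G.degree v = EE G := EE_delv G v
  obtain ⟨H, hKH, hsuppH, hfreeH, hsatH, hEleH⟩ :=
    exists_saturation r s' (Fintype.card (Sym2 V)) G0
      (by omega) hsupp0 hfree0
  letI instH : DecidableRel H.Adj := Classical.decRel _
  -- apply the induction hypothesis to H
  have hts : tE r k = tE r (k - 1) + ((k - 1) - (k - 1) / r) := by
    have h := tE_succ r (k - 1)
    rwa [Nat.sub_add_cancel (by omega : 1 ≤ k)] at h
  obtain ⟨f', hf'⟩ := IH (k - 1) (by omega) s' H instH hks' (by omega) hsuppH hfreeH hsatH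
    (by
      have hdiv : (k - 1) / r ≤ k / r := Nat.div_le_div_right (by omega)
      omega)
  -- the classes restricted to the neighbourhood of v
  set Al : Fin r → Finset V := fun l => s'.filter (fun x => f' x = l ∧ G.Adj v x) with hAl
  by_cases hext : ∃ l, Al l = ∅
  · -- extension: v can be coloured with colour l
    obtain ⟨l, hl⟩ := hext
    refine ⟨Function.update f' v l, relSat_coloring hsupp hfree hsat _ ?_⟩
    intro a b ha hb hadj
    by_cases hav : a = v
    · have hbv : b ≠ v := fun h => (G.ne_of_adj hadj) (hav.trans h.symm)
      have hbs' : b ∈ s' := Finset.mem_erase.mpr ⟨hbv, hb⟩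
      rw [hav, Function.update_self, Function.update_of_ne hbv]
      intro hc
      have hmem : b ∈ Al l := by
        rw [hAl]
        exact mem_filter.mpr ⟨hbs', hc.symm, hav ▸ hadj⟩
      rw [hl] at hmem
      exact absurd hmem (Finset.notMem_empty b)
    · by_cases hbv : b = v
      · have has' : a ∈ s' := Finset.mem_erase.mpr ⟨hav, ha⟩
        rw [hbv, Function.update_self, Function.update_of_ne hav]
        intro hc
        have hmem : a ∈ Al l := by
          rw [hAl]
          exact mem_filter.mpr ⟨has', hc, (hbv ▸ hadj).symm⟩
        rw [hl] at hmem
        exact absurd hmem (Finset.notMem_empty a)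
      · rw [Function.update_of_ne hav, Function.update_of_ne hbv]
        have has' : a ∈ s' := Finset.mem_erase.mpr ⟨hav, ha⟩
        have hbs' : b ∈ s' := Finset.mem_erase.mpr ⟨hbv, hb⟩
        have hadj0 : G0.Adj a b := ⟨hadj, hav, hbv⟩
        have hadjH : H.Adj a b := hKH hadj0
        exact (hf' a has' b hbs').mp hadjH
  -- no extension: every class meets N(v); derive a contradiction with the edge count
  exfalso
  push_neg at hext
  have hAne : ∀ l, (Al l).Nonempty := fun l =>
    hext l
  obtain ⟨i, j, hij, hbound⟩ := lp_bound Al hAne G v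
    (fun l x hx => (mem_filter.mp hx).2.2)
    (by
      intro l l' x hne hx hx'
      exact hne ((mem_filter.mp hx).2.1.symm.trans (mem_filter.mp hx').2.1))
    hfree
  -- notation for the counting
  set B : Finset (Fin r × Fin r) :=
    (univ ×ˢ univ : Finset (Fin r × Fin r)).filter (fun p => p.1 < p.2) with hB
  set reg : Fin r × Fin r → Finset (V × V) :=
    fun p => ((Al p.1) ×ˢ (Al p.2)).filter (fun q => ¬ G.Adj q.1 q.2) with hreg
  set NN : Finset V := s'.filter (fun x => G.Adj v x) with hNN
  have hNdeg : #NN = G.degree v := by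
    rw [← SimpleGraph.card_neighborFinset_eq_degree]
    congr 1
    ext y
    simp only [hNN, mem_filter, SimpleGraph.mem_neighborFinset, hs', Finset.mem_erase]
    constructor
    · rintro ⟨_, h⟩; exact h
    · intro h; exact ⟨⟨(G.ne_of_adj h).symm, hsupp.mem_right h⟩, h⟩
  have hAlN : ∀ l, NN.filter (fun x => f' x = l) = Al l := by
    intro l
    ext x
    simp only [hNN, hAl, mem_filter]
    tauto
  have hsum_nu : ∑ l : Fin r, #(Al l) = G.degree v := by
    rw [← hNdeg]
    rw [Finset.card_eq_sum_card_fiberwise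
      (s := NN) (t := (univ : Finset (Fin r))) (f := f') (fun x _ => mem_univ _)]
    exact Finset.sum_congr rfl fun l _ => by rw [hAlN l]
  have hsum_e : ∑ l : Fin r, #(s'.filter (f' · = l)) = k - 1 := by
    rw [← hks']
    rw [Finset.card_eq_sum_card_fiberwise
      (s := s') (t := (univ : Finset (Fin r))) (f := f') (fun x _ => mem_univ _)]
  have hnu_le_e : ∀ l, #(Al l) ≤ #(s'.filter (f' · = l)) := by
    intro l
    apply Finset.card_le_card
    intro x hx
    rw [hAl] at hx
    obtain ⟨hxs, hxf, _⟩ := mem_filter.mp hx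
    exact mem_filter.mpr ⟨hxs, hxf⟩
  have hCM := cm_edge_count hsuppH hf'
  rw [hks'] at hCM
  -- missing edges bound
  have hdisjreg : ∀ p ∈ B, ∀ p' ∈ B, p ≠ p' → Disjoint (reg p) (reg p') := by
    intro p hp p' hp' hne
    rw [Finset.disjoint_left]
    intro q hq hq'
    apply hne
    rw [hreg] at hq hq'
    simp only [mem_filter, mem_product, hAl] at hq hq'
    obtain ⟨⟨h1, h2⟩, _⟩ := hq
    obtain ⟨⟨h1', h2'⟩, _⟩ := hq'
    have e1 : f' q.1 = p.1 := h1.2.1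
    have e2 : f' q.2 = p.2 := h2.2.1
    have e1' : f' q.1 = p'.1 := h1'.2.1
    have e2' : f' q.2 = p'.2 := h2'.2.1
    exact Prod.ext (e1 ▸ e1') (e2 ▸ e2')
  have hsumU : ∑ p ∈ B, #(reg p) = #(B.biUnion reg) :=
    (Finset.card_biUnion hdisjreg).symm
  have hG0sub : G0.edgeFinset ⊆ H.edgeFinset :=
    SimpleGraph.edgeFinset_subset_edgeFinset.mpr hKH
  have hregmem : ∀ q ∈ B.biUnion reg,
      s(q.1, q.2) ∈ H.edgeFinset \ G0.edgeFinset := by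
    intro q hq
    obtain ⟨p, hp, hqp⟩ := Finset.mem_biUnion.mp hq
    rw [hreg] at hqp
    simp only [mem_filter, mem_product] at hqp
    obtain ⟨⟨h1, h2⟩, hnadj⟩ := hqp
    rw [hAl] at h1 h2
    obtain ⟨h1s, h1f, _⟩ := mem_filter.mp h1
    obtain ⟨h2s, h2f, _⟩ := mem_filter.mp h2
    have hplt : p.1 < p.2 := (mem_filter.mp hp).2
    have hfne : f' q.1 ≠ f' q.2 := by
      rw [h1f, h2f]; exact ne_of_lt hplt
    have hadjH : H.Adj q.1 q.2 := (hf' q.1 h1s q.2 h2s).mpr hfne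
    rw [Finset.mem_sdiff]
    constructor
    · rw [SimpleGraph.mem_edgeFinset, SimpleGraph.mem_edgeSet]
      exact hadjH
    · rw [SimpleGraph.mem_edgeFinset, SimpleGraph.mem_edgeSet]
      intro hadj0
      exact hnadj (delv_le G v hadj0)
  have hreginj : Set.InjOn (fun q : V × V => s(q.1, q.2)) ↑(B.biUnion reg) := by
    intro q hq q' hq' heq
    simp only [Finset.coe_biUnion, Set.mem_iUnion, mem_coe] at hq hq'
    obtain ⟨p, hp, hqp⟩ := hq
    obtain ⟨p', hp', hqp'⟩ := hq'
    rw [hreg] at hqp hqp'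
    simp only [mem_filter, mem_product] at hqp hqp'
    obtain ⟨⟨h1, h2⟩, _⟩ := hqp
    obtain ⟨⟨h1', h2'⟩, _⟩ := hqp'
    rw [hAl] at h1 h2 h1' h2'
    simp only [Sym2.eq_iff] at heq
    rcases heq with ⟨ha, hb⟩ | ⟨ha, hb⟩
    · exact Prod.ext ha hb
    · exfalso
      have e1 : f' q.1 = p.1 := (mem_filter.mp h1).2.1
      have e2 : f' q.2 = p.2 := (mem_filter.mp h2).2.1
      have e1' : f' q'.1 = p'.1 := (mem_filter.mp h1').2.1
      have e2' : f' q'.2 = p'.2 := (mem_filter.mp h2').2.1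
      have hplt : p.1 < p.2 := (mem_filter.mp hp).2
      have hplt' : p'.1 < p'.2 := (mem_filter.mp hp').2
      have hp12 : p.1 = p'.2 := by rw [← e1, ha, e2']
      have hp21 : p.2 = p'.1 := by rw [← e2, hb, e1']
      have hcyc : p'.2 < p'.2 := by
        calc p'.2 = p.1 := hp12.symm
        _ < p.2 := hplt
        _ = p'.1 := hp21
        _ < p'.2 := hplt'
      exact lt_irrefl _ hcyc
  have hmissle : #(B.biUnion reg) ≤ #(H.edgeFinset \ G0.edgeFinset) :=
    Finset.card_le_card_of_injOn _ hregmem hreginj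
  have hsdiffcard : #(H.edgeFinset \ G0.edgeFinset) + #G0.edgeFinset = #H.edgeFinset :=
    Finset.card_sdiff_add_card_eq_card hG0sub
  have hE0 : EE G0 = #G0.edgeFinset := ncE _
  have hEH : EE H = #H.edgeFinset := ncE _
  have hmiss : (∑ p ∈ B, #(reg p)) + EE G0 ≤ EE H := by
    rw [hsumU, hE0, hEH]
    omega
  -- sum splits at i and j
  have hijne : i ≠ j := ne_of_lt hij
  have hsubij : ({i, j} : Finset (Fin r)) ⊆ univ := subset_univ _
  have hsplit_nu : ∑ l : Fin r, #(Al l)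
      = ∑ l ∈ (univ \ {i, j} : Finset (Fin r)), #(Al l) + (#(Al i) + #(Al j)) := by
    rw [← Finset.sum_pair (f := fun l => #(Al l)) hijne, Finset.sum_sdiff hsubij]
  have hsplit_e : ∑ l : Fin r, #(s'.filter (f' · = l))
      = ∑ l ∈ (univ \ {i, j} : Finset (Fin r)), #(s'.filter (f' · = l))
        + (#(s'.filter (f' · = i)) + #(s'.filter (f' · = j))) := by
    rw [← Finset.sum_pair (f := fun l => #(s'.filter (f' · = l))) hijne,
      Finset.sum_sdiff hsubij]
  have hrest : ∑ l ∈ (univ \ {i, j} : Finset (Fin r)), #(Al l)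
      ≤ ∑ l ∈ (univ \ {i, j} : Finset (Fin r)), #(s'.filter (f' · = l)) :=
    Finset.sum_le_sum fun l _ => hnu_le_e l
  have hnupos : 1 ≤ #(Al i) ∧ 1 ≤ #(Al j) :=
    ⟨Finset.card_pos.mpr (hAne i), Finset.card_pos.mpr (hAne j)⟩
  have hprod : #(Al i) + #(Al j) ≤ #(Al i) * #(Al j) + 1 := by
    obtain ⟨h1, h2⟩ := hnupos
    obtain ⟨a, ha⟩ := Nat.exists_eq_add_of_le h1
    obtain ⟨b, hb⟩ := Nat.exists_eq_add_of_le h2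
    rw [ha, hb]
    have hx : (1 + a) * (1 + b) = 1 + a + b + a * b := by ring
    omega
  have hfin := final_ineq hr (fun l => #(s'.filter (f' · = l))) i j hijne
  rw [hsum_e] at hfin
  have hk12 : k - 1 + 2 = k + 1 := by omega
  rw [hk12] at hfin
  have hmm1 : mm r (k + 1) = mm r k + k / r := mm_succ r k
  have hbridge : ∑ p ∈ B, #(reg p)
      = ∑ p ∈ B, #(((Al p.1) ×ˢ (Al p.2)).filter (fun q => ¬ G.Adj q.1 q.2)) := rfl
  have htm := tE_add_mm r k
  have hkk : (k - 1) * (k - 1) + 2 * k = k * k + 1 := by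
    obtain ⟨k', rfl⟩ : ∃ k', k = k' + 1 := ⟨k - 1, by omega⟩
    have h1 : k' + 1 - 1 = k' := by omega
    rw [h1]
    have h2 : (k' + 1) * (k' + 1) = k' * k' + 2 * k' + 1 := by ring
    omega
  omega

end BrouwerAux
/-- Number of edges of the Turán graph `T(n,r)`. -/
noncomputable def turanEdges (n r : ℕ) : ℕ := (SimpleGraph.turanGraph n r).edgeSet.ncard

theorem saturated_near_extremal_complete_multipartite (n r : ℕ) (hn : 2 * r + 1 ≤ n)
    (G : SimpleGraph (Fin n)) (hfree : G.CliqueFree (r + 1))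
    (hsat : ∀ u v : Fin n, u ≠ v → ¬ G.Adj u v →
      ¬ (G ⊔ SimpleGraph.fromEdgeSet {s(u, v)}).CliqueFree (r + 1))
    (he : turanEdges n r - n / r + 1 < G.edgeSet.ncard) :
    ∃ f : Fin n → Fin r, ∀ u v : Fin n, G.Adj u v ↔ f u ≠ f v := by
  classical
  open Finset SimpleGraph BrouwerAux in
  match hr2 : r with
  | 0 =>
    -- `CliqueFree 1` is impossible on a nonempty vertex set
    exfalso
    have hv : (0 : ℕ) < n := by omega
    exact hfree {⟨0, hv⟩} ⟨by simp [SimpleGraph.IsClique], by simp⟩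
  | 1 =>
    -- a `K₂`-free graph has no edges at all
    exfalso
    have hbot : G = ⊥ := SimpleGraph.cliqueFree_two.mp hfree
    have hE : G.edgeSet.ncard = 0 := by
      rw [hbot]
      simp
    rw [hE] at he
    omega
  | (m + 2) =>
    set R : ℕ := m + 2 with hR
    have hr2' : 2 ≤ R := by omega
    have hr : 0 < R := by omega
    letI instG : DecidableRel G.Adj := Classical.decRel _
    have hTE : turanEdges n R = BrouwerAux.tE R n := by
      rw [turanEdges, ← BrouwerAux.EE]
      rw [BrouwerAux.ncE]
      exact BrouwerAux.turan_edge_count n R hr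
    have hEG : BrouwerAux.EE G = G.edgeSet.ncard := rfl
    have hcard : #(Finset.univ : Finset (Fin n)) = n := by simp
    have hsupp : BrouwerAux.Supp (Finset.univ : Finset (Fin n)) G :=
      fun x y _ => Finset.mem_univ x
    have hsat' : BrouwerAux.RelSat R (Finset.univ : Finset (Fin n)) G :=
      fun x y _ _ hxy hnadj => hsat x y hxy hnadj
    have he' : BrouwerAux.tE R n + 2 ≤ BrouwerAux.EE G + n / R := by
      rw [hEG]
      rw [hTE] at he
      omega
    obtain ⟨f, hf⟩ := BrouwerAux.main_induction R hr2' n Finset.univ G instG hcard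
      (by omega) hsupp hfree hsat' he'
    exact ⟨f, fun u v => hf u (Finset.mem_univ u) v (Finset.mem_univ v)⟩
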